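/- arXiv:1703.09578 — 3 statements merged into one kernel-verified Lean document; each statement's English description precedes it below -/
import Mathlib

section
/- With the identification of H with ℝ^{d-1} × ℝ×, the product of h_{s,a} and h_{s',a'} corresponds to the pair (Λ(a)⁻¹ s' + B(Λ(a)⁻¹ s')ᵀ s, a a'). -/
open Matrix

noncomputable def LamMat (n : ℕ) (l : Fin n → ℝ) (a : ℝ) : Matrix (Fin n) (Fin n) ℝ :=
  Matrix.diagonal fun i => |a| ^ (l i)

lemma Lam_mul (n : ℕ) (l : Fin n → ℝ) (a a' : ℝ) :
    LamMat n l a * LamMat n l a' = LamMat n l (a * a') := by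
  simp only [LamMat, diagonal_mul_diagonal, abs_mul,
    Real.mul_rpow (abs_nonneg _) (abs_nonneg _)]

lemma Lam_det_ne (n : ℕ) (l : Fin n → ℝ) (a : ℝ) (ha : a ≠ 0) :
    (LamMat n l a).det ≠ 0 := by
  rw [LamMat, det_diagonal]
  exact Finset.prod_ne_zero_iff.2 fun i _ =>
    ne_of_gt (Real.rpow_pos_of_pos (abs_pos.2 ha) _)

lemma Lam_transpose (n : ℕ) (l : Fin n → ℝ) (a : ℝ) :
    (LamMat n l a)ᵀ = LamMat n l a := diagonal_transpose _

/-- `h_{s,a} = a·[[1, -sᵀΛ(a)],[0, B(s)Λ(a)]]`. -/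
noncomputable def hMat (n : ℕ) (l : Fin n → ℝ)
    (B : (Fin n → ℝ) → Matrix (Fin n) (Fin n) ℝ) (s : Fin n → ℝ) (a : ℝ) :
    Matrix (Unit ⊕ Fin n) (Unit ⊕ Fin n) ℝ :=
  a • Matrix.fromBlocks 1 (Matrix.replicateRow Unit (-(LamMat n l a *ᵥ s))) 0 (B s * LamMat n l a)

/-- with the identification of `H` with `ℝⁿ × ℝˣ`, the product
`h_{s,a} h_{s',a'}` corresponds to the pair `(Λ(a)⁻¹ s' + B(Λ(a)⁻¹ s')ᵀ s, a a')`. -/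
theorem hMat_mul (n : ℕ) (l : Fin n → ℝ)
    (B : (Fin n → ℝ) → Matrix (Fin n) (Fin n) ℝ)
    (h0 : B 0 = 1)
    (hmul : ∀ u v : Fin n → ℝ, B u * B v = B (v + (B v)ᵀ *ᵥ u))
    (hcompat : ∀ a : ℝ, a ≠ 0 → ∀ s : Fin n → ℝ,
      LamMat n l a * B s * (LamMat n l a)⁻¹ = B ((LamMat n l a)⁻¹ *ᵥ s))
    (s s' : Fin n → ℝ) (a a' : ℝ) (ha : a ≠ 0) (ha' : a' ≠ 0) :
    hMat n l B s a * hMat n l B s' a' =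
      hMat n l B
        ((LamMat n l a)⁻¹ *ᵥ s' + (B ((LamMat n l a)⁻¹ *ᵥ s'))ᵀ *ᵥ s) (a * a') := by
  set Λ := LamMat n l a with hΛ
  set Λ' := LamMat n l a' with hΛ'
  have hdet : Λ.det ≠ 0 := Lam_det_ne n l a ha
  have hinvΛ : Λ⁻¹ * Λ = 1 := nonsing_inv_mul Λ hdet.isUnit
  have hΛinv : Λ * Λ⁻¹ = 1 := mul_nonsing_inv Λ hdet.isUnit
  set S : Fin n → ℝ := Λ⁻¹ *ᵥ s' + (B (Λ⁻¹ *ᵥ s'))ᵀ *ᵥ s with hS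
  -- key rearranged compatibility
  have key : Λ * B s' = B (Λ⁻¹ *ᵥ s') * Λ := by
    calc Λ * B s' = Λ * B s' * (Λ⁻¹ * Λ) := by rw [hinvΛ, mul_one]
    _ = (Λ * B s' * Λ⁻¹) * Λ := by noncomm_ring
    _ = B (Λ⁻¹ *ᵥ s') * Λ := by rw [hcompat a ha s']
  have keyT : (B s')ᵀ * Λ = Λ * (B (Λ⁻¹ *ᵥ s'))ᵀ := by
    have := congrArg Matrix.transpose key
    simpa [transpose_mul, hΛ, Lam_transpose] using this
  -- bottom-right block
  have hBR : B s * Λ * (B s' * Λ') = B S * LamMat n l (a * a') := by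
    calc B s * Λ * (B s' * Λ') = B s * (Λ * B s') * Λ' := by noncomm_ring
    _ = B s * (B (Λ⁻¹ *ᵥ s') * Λ) * Λ' := by rw [key]
    _ = (B s * B (Λ⁻¹ *ᵥ s')) * (Λ * Λ') := by noncomm_ring
    _ = B S * LamMat n l (a * a') := by rw [hmul, hS, hΛ, hΛ', Lam_mul]
  -- top-right vector
  have hTR : -(Λ' *ᵥ s') + (-(Λ *ᵥ s)) ᵥ* (B s' * Λ') =
      -(LamMat n l (a * a') *ᵥ S) := by
    have h1 : (-(Λ *ᵥ s)) ᵥ* (B s' * Λ') = -((Λ' * ((B s')ᵀ * Λ)) *ᵥ s) := by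
      rw [← mulVec_transpose, transpose_mul, mulVec_neg, mulVec_mulVec,
        hΛ', Lam_transpose, ← mul_assoc]
    have h2 : LamMat n l (a * a') *ᵥ S =
        Λ' *ᵥ s' + (Λ' * ((B s')ᵀ * Λ)) *ᵥ s := by
      rw [mul_comm a a', ← Lam_mul n l a' a, ← hΛ, ← hΛ', hS, mulVec_add,
        mulVec_mulVec, mulVec_mulVec]
      congr 1
      · rw [mul_assoc, hΛinv, mul_one]
      · rw [mul_assoc, ← keyT, ← mul_assoc]
    rw [h1, h2]
    abel
  -- assemble
  simp only [hMat, ← hΛ, ← hΛ']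
  rw [Matrix.smul_mul, Matrix.mul_smul, smul_smul, fromBlocks_multiply]
  congr 1
  simp only [Matrix.mul_zero, Matrix.zero_mul, Matrix.mul_one, Matrix.one_mul,
    add_zero, zero_add]
  rw [hBR, ← hTR, ← Matrix.replicateRow_vecMul, ← Matrix.replicateRow_add]
end

section
/- For a shearlet dilation group H with the change of variables a = ξ₁, s = Λ(ξ₁)⁻¹ ξ'/ξ₁, and left Haar measure |a|^{λ_D−1} ds da on H, one has ∫_H |F(hᵀξ₀)|² dh = ∫_{ℝ×ℝ^{d-1}} |F(ξ₁,ξ')|² / |ξ₁|^d dξ₁ dξ' for every nonnegative measurable F : ℝ^d → [0,∞]. -/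
open Matrix MeasureTheory ENNReal

/-- `ξ₀ = (1,0,…,0)`. -/
def xi0 (n : ℕ) : Unit ⊕ Fin n → ℝ := Sum.elim (fun _ => 1) 0

lemma hMat_transpose_mulVec_xi0 (n : ℕ) (l : Fin n → ℝ)
    (B : (Fin n → ℝ) → Matrix (Fin n) (Fin n) ℝ) (s : Fin n → ℝ) (a : ℝ) :
    (hMat n l B s a)ᵀ *ᵥ xi0 n
      = Sum.elim (fun _ => a) (fun j => -(a * |a| ^ (l j)) * s j) := by
  funext j
  cases j with
  | inl u =>
    simp [hMat, xi0, LamMat, Matrix.mulVec, dotProduct, Fintype.sum_sum_type]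
  | inr j =>
    simp [hMat, xi0, LamMat, Matrix.mulVec, dotProduct, Fintype.sum_sum_type,
      Matrix.diagonal_apply, ite_mul, zero_mul, Finset.sum_ite_eq]
    ring

/-- with the left Haar measure `|a|^{λ_D−1} ds da` on `H` and the change of
variables `a = ξ₁`, `s = Λ(ξ₁)⁻¹ ξ'/ξ₁`, for every nonnegative measurable `F` one has
`∫_H F(hᵀξ₀) dh = ∫ F(ξ₁,ξ')/|ξ₁|^d dξ₁ dξ'` (here `d = n+1`, `λ_D = λ₁+⋯+λₙ`). -/
theorem haar_orbit_change_of_variables (n : ℕ) (l : Fin n → ℝ)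
    (B : (Fin n → ℝ) → Matrix (Fin n) (Fin n) ℝ)
    (htri : ∀ s : Fin n → ℝ, ∀ i j : Fin n, j < i → B s i j = 0)
    (hdiag : ∀ s : Fin n → ℝ, ∀ i : Fin n, B s i i = 1)
    (F : (Unit ⊕ Fin n → ℝ) → ℝ≥0∞) (hF : Measurable F) :
    ∫⁻ p : (Fin n → ℝ) × ℝ,
        F ((hMat n l B p.1 p.2)ᵀ *ᵥ xi0 n) *
          ENNReal.ofReal (|p.2| ^ ((∑ i, l i) - 1)) ∂volume =
      ∫⁻ q : ℝ × (Fin n → ℝ),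
        F (Sum.elim (fun _ => q.1) q.2) /
          ENNReal.ofReal (|q.1| ^ ((n : ℝ) + 1)) ∂volume := by
  classical
  -- measurability of the inner slice maps
  have hg : ∀ a : ℝ, Measurable (fun ξ : Fin n → ℝ => F (Sum.elim (fun _ => a) ξ)) := by
    intro a
    refine hF.comp (measurable_pi_lambda _ fun j => ?_)
    cases j with
    | inl u => exact measurable_const
    | inr j => exact measurable_pi_apply j
  have hrp : ∀ r : ℝ, Measurable fun x : ℝ => |x| ^ r := fun r =>
    by measurability
  have hmeas1 : Measurable (fun p : (Fin n → ℝ) × ℝ =>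
      F (Sum.elim (fun _ => p.2) fun j => -(p.2 * |p.2| ^ (l j)) * p.1 j) *
        ENNReal.ofReal (|p.2| ^ ((∑ i, l i) - 1))) := by
    refine Measurable.mul (hF.comp (measurable_pi_lambda _ fun j => ?_))
      (ENNReal.measurable_ofReal.comp ((hrp _).comp measurable_snd))
    cases j with
    | inl u => exact measurable_snd
    | inr j =>
      exact ((measurable_snd.mul ((hrp (l j)).comp measurable_snd)).neg).mul
        ((measurable_pi_apply j).comp measurable_fst)
  have hmeas2 : Measurable (fun q : ℝ × (Fin n → ℝ) =>
      F (Sum.elim (fun _ => q.1) q.2) /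
        ENNReal.ofReal (|q.1| ^ ((n : ℝ) + 1))) := by
    refine Measurable.div (hF.comp (measurable_pi_lambda _ fun j => ?_))
      (ENNReal.measurable_ofReal.comp ((hrp _).comp measurable_fst))
    cases j with
    | inl u => exact measurable_fst
    | inr j => exact (measurable_pi_apply j).comp measurable_snd
  simp_rw [hMat_transpose_mulVec_xi0]
  rw [Measure.volume_eq_prod, Measure.volume_eq_prod,
    lintegral_prod_symm _ hmeas1.aemeasurable, lintegral_prod _ hmeas2.aemeasurable]
  refine lintegral_congr_ae ?_
  filter_upwards [compl_mem_ae_iff.2 (measure_singleton (0 : ℝ))] with a ha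
  have ha0 : a ≠ 0 := by simpa using ha
  have hA : 0 < |a| := abs_pos.2 ha0
  set c : Fin n → ℝ := fun j => -(a * |a| ^ (l j)) with hc
  have hcne : ∀ j, c j ≠ 0 := fun j =>
    neg_ne_zero.2 (mul_ne_zero ha0 (Real.rpow_pos_of_pos hA _).ne')
  have hdet0 : LinearMap.det (Matrix.toLin' (Matrix.diagonal c)) ≠ 0 := by
    rw [LinearMap.det_toLin', Matrix.det_diagonal]
    exact Finset.prod_ne_zero_iff.2 fun j _ => hcne j
  have hm : Measurable (Matrix.toLin' (Matrix.diagonal c)) :=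
    (LinearMap.continuous_of_finiteDimensional _).measurable
  have happ : ∀ s : Fin n → ℝ,
      (fun j => -(a * |a| ^ (l j)) * s j) = (Matrix.toLin' (Matrix.diagonal c)) s := by
    intro s; funext j
    simp [Matrix.toLin'_apply, Matrix.mulVec_diagonal, hc]
  have habs : |∏ j, c j| = |a| ^ ((n : ℝ) + ∑ i, l i) := by
    rw [Finset.abs_prod]
    have : ∀ j ∈ Finset.univ, |c j| = |a| * |a| ^ (l j) := by
      intro j _
      rw [hc, abs_neg, abs_mul, abs_of_pos (Real.rpow_pos_of_pos hA _)]
    rw [Finset.prod_congr rfl this, Finset.prod_mul_distrib, Finset.prod_const,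
      ← Real.rpow_sum_of_pos hA, Finset.card_univ, Fintype.card_fin,
      ← Real.rpow_natCast |a| n, ← Real.rpow_add hA]
  have hmapint : ∫⁻ x : Fin n → ℝ, F ((fun _ => a) ⊕ᵥ (Matrix.toLin' (Matrix.diagonal c)) x)
      = ENNReal.ofReal |(LinearMap.det (Matrix.toLin' (Matrix.diagonal c)))⁻¹|
          * ∫⁻ y : Fin n → ℝ, F ((fun _ => a) ⊕ᵥ y) := by
    rw [← smul_eq_mul, ← lintegral_smul_measure, ← Real.map_linearMap_volume_pi_eq_smul_volume_pi hdet0,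
      MeasureTheory.lintegral_map (hg a) hm]
  simp_rw [happ, div_eq_mul_inv]
  rw [lintegral_mul_const' _ _ ENNReal.ofReal_ne_top, hmapint,
    lintegral_mul_const' _ _ (ENNReal.inv_ne_top.2
      (ENNReal.ofReal_pos.2 (Real.rpow_pos_of_pos hA _)).ne'),
    LinearMap.det_toLin', Matrix.det_diagonal, abs_inv, habs]
  have hval : (|a| ^ ((n : ℝ) + ∑ i, l i))⁻¹ * |a| ^ ((∑ i, l i) - 1)
      = (|a| ^ ((n : ℝ) + 1))⁻¹ := by
    rw [← Real.rpow_neg hA.le, ← Real.rpow_neg hA.le, ← Real.rpow_add hA]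
    congr 1; ring
  have hsc : ENNReal.ofReal ((|a| ^ ((n : ℝ) + ∑ i, l i))⁻¹) *
        ENNReal.ofReal (|a| ^ ((∑ i, l i) - 1))
      = (ENNReal.ofReal (|a| ^ ((n : ℝ) + 1)))⁻¹ := by
    rw [← ENNReal.ofReal_mul (inv_nonneg.2 (Real.rpow_pos_of_pos hA _).le), hval,
      ENNReal.ofReal_inv_of_pos (Real.rpow_pos_of_pos hA _)]
  rw [mul_right_comm, hsc, mul_comm]
end

section
/- Fourier slice theorem (affine form): for f ∈ L¹(ℝ^d), v ∈ ℝ^{d-1}, and τ ∈ ℝ, the one-dimensional Fourier transform of t ↦ R^aff f(v,t) at τ equals the d-dimensional Fourier transform of f evaluated at τ·(1,v), i.e. ∫_ℝ R^aff f(v,t) e^{−2πiτt} dt = f̂(τ, τv). -/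
open MeasureTheory Matrix Real

/-- The affine Radon transform `R^aff f(v,t) = ∫_{ℝⁿ} f(t − v·y, y) dy`. -/
noncomputable def Raff (n : ℕ) (f : ℝ × (Fin n → ℝ) → ℂ) (v : Fin n → ℝ) (t : ℝ) : ℂ :=
  ∫ y : Fin n → ℝ, f (t - v ⬝ᵥ y, y)

/-- The Fourier transform on `ℝ^d = ℝ × ℝⁿ`:
`f̂(ξ) = ∫ f(x) e^{−2πi ξ·x} dx`. -/
noncomputable def fourierRd (n : ℕ) (f : ℝ × (Fin n → ℝ) → ℂ) (ξ : ℝ × (Fin n → ℝ)) : ℂ :=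
  ∫ x : ℝ × (Fin n → ℝ),
    f x * Complex.exp (-(2 * π * Complex.I * ((ξ.1 * x.1 + ξ.2 ⬝ᵥ x.2 : ℝ) : ℂ)))

/-- Fourier slice theorem, affine form: for `f ∈ L¹(ℝ^d)`,
`∫ R^aff f(v,t) e^{−2πiτt} dt = f̂(τ, τv)`. -/
theorem fourier_slice (n : ℕ) (f : ℝ × (Fin n → ℝ) → ℂ) (hf : Integrable f volume)
    (v : Fin n → ℝ) (τ : ℝ) :
    ∫ t : ℝ, Raff n f v t * Complex.exp (-(2 * π * Complex.I * ((τ * t : ℝ) : ℂ))) =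
      fourierRd n f (τ, τ • v) := by
  have hdot : Continuous fun y : Fin n → ℝ => v ⬝ᵥ y := by
    unfold dotProduct
    exact continuous_finset_sum _ fun i _ => continuous_const.mul (continuous_apply i)
  -- the shear map
  set φ : ℝ × (Fin n → ℝ) → ℝ × (Fin n → ℝ) := fun p => (p.1 - v ⬝ᵥ p.2, p.2) with hφdef
  -- as a measurable equiv
  let e : ℝ × (Fin n → ℝ) ≃ᵐ ℝ × (Fin n → ℝ) :=
    { toFun := φ
      invFun := fun p => (p.1 + v ⬝ᵥ p.2, p.2)
      left_inv := fun p => by simp [φ]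
      right_inv := fun p => by simp [φ]
      measurable_toFun :=
        (measurable_fst.sub ((hdot.comp continuous_snd).measurable)).prodMk measurable_snd
      measurable_invFun :=
        (measurable_fst.add ((hdot.comp continuous_snd).measurable)).prodMk measurable_snd }
  -- φ is measure preserving
  have hψ : MeasurePreserving (fun p : (Fin n → ℝ) × ℝ => (p.1, p.2 - v ⬝ᵥ p.1))
      (volume : Measure ((Fin n → ℝ) × ℝ)) volume := by
    rw [Measure.volume_eq_prod]
    exact (MeasurePreserving.id volume).skew_product
      (g := fun (y : Fin n → ℝ) (t : ℝ) => t - v ⬝ᵥ y)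
      ((measurable_snd.sub ((hdot.comp continuous_fst).measurable) :
        Measurable fun p : (Fin n → ℝ) × ℝ => p.2 - v ⬝ᵥ p.1))
      (Filter.Eventually.of_forall fun y => (measurePreserving_sub_right volume (v ⬝ᵥ y)).map_eq)
  have hφ : MeasurePreserving φ (volume : Measure (ℝ × (Fin n → ℝ))) volume := by
    have := (Measure.measurePreserving_swap).comp (hψ.comp (Measure.measurePreserving_swap
      (μ := (volume : Measure ℝ)) (ν := (volume : Measure (Fin n → ℝ)))))
    have hfun : φ = Prod.swap ∘ (fun p : (Fin n → ℝ) × ℝ => (p.1, p.2 - v ⬝ᵥ p.1)) ∘ Prod.swap := by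
      funext p; rfl
    rw [hfun]; exact this
  -- the target integrand
  set F : ℝ × (Fin n → ℝ) → ℂ :=
    fun x => f x * Complex.exp (-(2 * π * Complex.I * ((τ * (x.1 + v ⬝ᵥ x.2) : ℝ) : ℂ))) with hFdef
  have hF : Integrable F volume := by
    have hexp : Continuous fun x : ℝ × (Fin n → ℝ) =>
        Complex.exp (-(2 * π * Complex.I * ((τ * (x.1 + v ⬝ᵥ x.2) : ℝ) : ℂ))) := by
      apply Complex.continuous_exp.comp
      apply Continuous.neg
      apply continuous_const.mul
      exact Complex.continuous_ofReal.comp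
        (continuous_const.mul (continuous_fst.add (hdot.comp continuous_snd)))
    have := hf.bdd_mul hexp.aestronglyMeasurable (c := 1) (Filter.Eventually.of_forall fun x => by
      rw [Complex.norm_exp]
      simp [mul_comm, mul_assoc, mul_left_comm])
    refine this.congr (Filter.Eventually.of_forall fun x => mul_comm _ _)
  have hFφ : Integrable (F ∘ φ) volume := (hφ.integrable_comp_emb e.measurableEmbedding).mpr hF
  have key : ∀ t y, F (φ (t, y)) =
      f (t - v ⬝ᵥ y, y) * Complex.exp (-(2 * π * Complex.I * ((τ * t : ℝ) : ℂ))) := by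
    intro t y
    simp [F, φ]
  calc
    ∫ t : ℝ, Raff n f v t * Complex.exp (-(2 * π * Complex.I * ((τ * t : ℝ) : ℂ)))
        = ∫ t : ℝ, ∫ y : Fin n → ℝ,
            f (t - v ⬝ᵥ y, y) * Complex.exp (-(2 * π * Complex.I * ((τ * t : ℝ) : ℂ))) := by
          simp only [Raff, integral_mul_const]
    _ = ∫ p : ℝ × (Fin n → ℝ), F (φ p) := by
          have hint : Integrable (Function.uncurry fun t (y : Fin n → ℝ) =>
              f (t - v ⬝ᵥ y, y) * Complex.exp (-(2 * π * Complex.I * ((τ * t : ℝ) : ℂ))))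
              ((volume : Measure ℝ).prod volume) := by
            rw [← Measure.volume_eq_prod]
            refine hFφ.congr (Filter.Eventually.of_forall fun p => ?_)
            exact (key p.1 p.2)
          rw [Measure.volume_eq_prod, integral_integral hint]
          exact integral_congr_ae (Filter.Eventually.of_forall fun p => (key p.1 p.2).symm)
    _ = ∫ p : ℝ × (Fin n → ℝ), F p := hφ.integral_comp e.measurableEmbedding F
    _ = fourierRd n f (τ, τ • v) := by
          unfold fourierRd
          refine integral_congr_ae (Filter.Eventually.of_forall fun x => ?_)
          have harg : (τ * (x.1 + v ⬝ᵥ x.2) : ℝ) =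
              ((τ, τ • v).1 * x.1 + (τ, τ • v).2 ⬝ᵥ x.2 : ℝ) := by
            simp [smul_dotProduct]
            ring
          simp only [F, harg]
end
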